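/- Witt's extension theorem for symplectic spaces: let W be a finite-dimensional symplectic vector space over a finite field, X ⊆ W a subspace, and α : X → W an injective linear map that is isometric (ω(α(x),α(y)) = ω(x,y) for all x,y ∈ X). Then α extends to a symplectic automorphism of W (a linear bijection preserving ω). -/

import Mathlib

open Module Submodule

section Witt

variable {k W : Type*} [Field k] [AddCommGroup W] [Module k W] [FiniteDimensional k W]
variable (ω : W →ₗ[k] W →ₗ[k] k)

lemma witt_skew (halt : ∀ v, ω v v = 0) (u v : W) : ω u v = - ω v u := by
  have h := halt (u + v)
  simp only [map_add, LinearMap.add_apply, halt u, halt v] at h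
  linear_combination h

lemma witt_refl (halt : ∀ v, ω v v = 0) : LinearMap.BilinForm.IsRefl ω := by
  intro u v h
  rw [witt_skew ω halt, h, neg_zero]

/-- radical dimension comparison under an isometric injection -/
lemma witt_rad_le (X : Submodule k W) (β : X →ₗ[k] W)
    (hinj : Function.Injective β)
    (hiso : ∀ x y : X, ω (β x) (β y) = ω (x : W) (y : W)) :
    finrank k ↥(X ⊓ LinearMap.BilinForm.orthogonal ω X) ≤
      finrank k ↥(LinearMap.range β ⊓
        LinearMap.BilinForm.orthogonal ω (LinearMap.range β)) := by
  set rX : Submodule k W := X ⊓ LinearMap.BilinForm.orthogonal ω X with hrX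
  set rX' : Submodule k X := rX.comap X.subtype with hrX'
  have h1 : finrank k ↥rX = finrank k ↥rX' :=
    (Submodule.comapSubtypeEquivOfLe (inf_le_left : rX ≤ X)).symm.finrank_eq
  have h2 : finrank k ↥rX' = finrank k ↥(rX'.map β) :=
    (Submodule.equivMapOfInjective β hinj rX').finrank_eq
  have h3 : rX'.map β ≤ LinearMap.range β ⊓
      LinearMap.BilinForm.orthogonal ω (LinearMap.range β) := by
    rintro s ⟨x, hx, rfl⟩
    refine ⟨LinearMap.mem_range_self β x, ?_⟩
    rintro r ⟨y, rfl⟩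
    have hxX : (x : W) ∈ LinearMap.BilinForm.orthogonal ω X :=
      (Submodule.mem_comap.mp hx).2
    have : ω (y : W) (x : W) = 0 := hxX _ y.2
    simpa [LinearMap.BilinForm.IsOrtho, hiso] using this
  calc finrank k ↥rX = finrank k ↥(rX'.map β) := by rw [h1, h2]
    _ ≤ _ := Submodule.finrank_mono h3

/-- the one-step extension: find a suitable image for `v`. -/
lemma witt_step (halt : ∀ v, ω v v = 0) (hnd : ∀ v, (∀ u, ω v u = 0) → v = 0)
    (X : Submodule k W) (β : X →ₗ[k] W) (hinj : Function.Injective β)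
    (hiso : ∀ x y : X, ω (β x) (β y) = ω (x : W) (y : W))
    (v : W) (hv : v ∉ X) :
    ∃ w : W, w ∉ LinearMap.range β ∧ ∀ x : X, ω (β x) w = ω (x : W) v := by
  have hndeg : LinearMap.BilinForm.Nondegenerate ω :=
    LinearMap.BilinForm.Nondegenerate.ofSeparatingLeft (fun m h => hnd m h)
  have hrefl := witt_refl ω halt
  set R := LinearMap.range β with hR
  set e : X ≃ₗ[k] R := LinearEquiv.ofInjective β hinj with he
  have hecoe : ∀ x : X, ((e x : R) : W) = β x := fun x => rfl
  -- the functional to realize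
  set c : X →ₗ[k] k := (ω.flip v).comp X.subtype with hc
  set g₀ : R →ₗ[k] k := c.comp (e.symm : R →ₗ[k] X) with hg₀
  obtain ⟨R', hcompl⟩ := Submodule.exists_isCompl R
  set g : W →ₗ[k] k := g₀.comp (R.linearProjOfIsCompl R' hcompl) with hg
  have hflip : LinearMap.BilinForm.Nondegenerate ω.flip := LinearMap.BilinForm.Nondegenerate.flip hndeg
  set w₀ : W := (LinearMap.BilinForm.toDual ω.flip hflip).symm g with hw₀def
  have hw₀ : ∀ u : W, ω u w₀ = g u := by
    intro u
    have := LinearMap.BilinForm.apply_toDual_symm_apply (hB := hflip) (f := g) (v := u)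
    simpa using this
  have key : ∀ x : X, ω (β x) w₀ = ω (x : W) v := by
    intro x
    have hmem : β x ∈ R := LinearMap.mem_range_self β x
    have h1 : g (β x) = g₀ ⟨β x, hmem⟩ := by
      rw [hg]
      simp only [LinearMap.comp_apply]
      congr 1
      exact Submodule.linearProjOfIsCompl_apply_left hcompl ⟨β x, hmem⟩
    have h2 : e.symm ⟨β x, hmem⟩ = x := by
      apply e.injective
      apply Subtype.ext
      simp [hecoe]
    rw [hw₀ (β x), h1, hg₀]
    simp only [LinearMap.comp_apply, LinearEquiv.coe_coe, h2]
    simp [hc]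
  by_cases hw₀R : w₀ ∈ R
  · -- w₀ = β u for some u
    obtain ⟨u, hu⟩ := hw₀R
    by_cases horth : LinearMap.BilinForm.orthogonal ω R ≤ R
    · -- coisotropic case: contradiction with v ∉ X
      exfalso
      -- first: orthogonal ω X ≤ X
      have hfr : finrank k X = finrank k R := e.finrank_eq
      -- reverse isometry γ : R → W with range X
      set γ : R →ₗ[k] W := X.subtype.comp (e.symm : R →ₗ[k] X) with hγ
      have hγinj : Function.Injective γ := by
        rw [hγ]
        exact X.injective_subtype.comp e.symm.injective
      have hγrange : LinearMap.range γ = X := by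
        rw [hγ, LinearMap.range_comp, LinearEquiv.range, Submodule.map_top,
          Submodule.range_subtype]
      have hγiso : ∀ r s : R, ω (γ r) (γ s) = ω (r : W) (s : W) := by
        intro r s
        have hr : (r : W) = β (e.symm r) := by
          conv_lhs => rw [← e.apply_symm_apply r]
          exact hecoe _
        have hs : (s : W) = β (e.symm s) := by
          conv_lhs => rw [← e.apply_symm_apply s]
          exact hecoe _
        rw [hr, hs, hiso]
        rfl
      have hle1 := witt_rad_le ω X β hinj hiso
      have hle2 := witt_rad_le ω R γ hγinj hγiso
      rw [hγrange] at hle2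
      have hradR : R ⊓ LinearMap.BilinForm.orthogonal ω R =
          LinearMap.BilinForm.orthogonal ω R := inf_eq_right.mpr horth
      rw [hradR] at hle1 hle2
      have horthR : finrank k ↥(LinearMap.BilinForm.orthogonal ω R) =
          finrank k W - finrank k R :=
        LinearMap.BilinForm.finrank_orthogonal hndeg R
      have horthX : finrank k ↥(LinearMap.BilinForm.orthogonal ω X) =
          finrank k W - finrank k X :=
        LinearMap.BilinForm.finrank_orthogonal hndeg X
      have heq : X ⊓ LinearMap.BilinForm.orthogonal ω X =
          LinearMap.BilinForm.orthogonal ω X := by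
        apply Submodule.eq_of_le_of_finrank_le inf_le_right
        omega
      have hXorth : LinearMap.BilinForm.orthogonal ω X ≤ X := by
        rw [← heq]; exact inf_le_left
      -- v - u ∈ orthogonal ω X ≤ X, so v ∈ X
      have hvu : v - (u : W) ∈ LinearMap.BilinForm.orthogonal ω X := by
        intro x hx
        have : ω x v = ω x (u : W) := by
          have := key ⟨x, hx⟩
          rw [← hu] at this
          have h2 := hiso ⟨x, hx⟩ u
          rw [← this]
          exact h2
        simp [LinearMap.BilinForm.IsOrtho, map_sub, this]
      have : v - (u : W) ∈ X := hXorth hvu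
      have : v ∈ X := by
        have := X.add_mem this u.2
        simpa using this
      exact hv this
    · -- there is z orthogonal to R but not in R
      rw [SetLike.not_le_iff_exists] at horth
      obtain ⟨z, hz, hzR⟩ := horth
      refine ⟨w₀ + z, ?_, ?_⟩
      · intro hmem
        have hsub := R.sub_mem hmem (hu ▸ LinearMap.mem_range_self β u)
        rw [add_sub_cancel_left] at hsub
        exact hzR hsub
      · intro x
        have : ω (β x) z = 0 := hz _ (LinearMap.mem_range_self β x)
        rw [map_add, this, add_zero, key]
  · exact ⟨w₀, hw₀R, key⟩

/-- the case when the domain is everything -/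
lemma witt_top (X : Submodule k W) (hX : X = ⊤) (β : X →ₗ[k] W)
    (hinj : Function.Injective β)
    (hiso : ∀ x y : X, ω (β x) (β y) = ω (x : W) (y : W)) :
    ∃ φ : W ≃ₗ[k] W, (∀ v w, ω (φ v) (φ w) = ω v w) ∧ ∀ x : X, φ (x : W) = β x := by
  set oT : X ≃ₗ[k] W := LinearEquiv.ofTop X hX with hoT
  have hcoe : ∀ x : X, oT x = (x : W) := fun x => rfl
  set g : W →ₗ[k] W := β.comp (oT.symm : W →ₗ[k] X) with hg
  have hginj : Function.Injective g := by
    rw [hg]; exact hinj.comp oT.symm.injective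
  have hgsurj : Function.Surjective g := LinearMap.surjective_of_injective hginj
  refine ⟨LinearEquiv.ofBijective g ⟨hginj, hgsurj⟩, ?_, ?_⟩
  · intro u w
    have hu : ((oT.symm u : X) : W) = u := by
      rw [← hcoe (oT.symm u), oT.apply_symm_apply]
    have hw : ((oT.symm w : X) : W) = w := by
      rw [← hcoe (oT.symm w), oT.apply_symm_apply]
    show ω (g u) (g w) = ω u w
    rw [hg]
    simp only [LinearMap.comp_apply, LinearEquiv.coe_coe]
    rw [hiso, hu, hw]
  · intro x
    show g (x : W) = β x
    rw [hg]
    simp only [LinearMap.comp_apply, LinearEquiv.coe_coe]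
    have hx : oT.symm ((x : W)) = x := by
      apply oT.injective
      rw [oT.apply_symm_apply]
      exact (hcoe x).symm
    rw [hx]

lemma witt_aux (halt : ∀ v, ω v v = 0) (hnd : ∀ v, (∀ u, ω v u = 0) → v = 0)
    (n : ℕ) :
    ∀ (f : W →ₗ.[k] W),
      finrank k W ≤ finrank k f.domain + n →
      Function.Injective f.toFun →
      (∀ x y : f.domain, ω (f x) (f y) = ω (x : W) (y : W)) →
      ∃ φ : W ≃ₗ[k] W, (∀ v w, ω (φ v) (φ w) = ω v w) ∧
        ∀ x : f.domain, φ (x : W) = f x := by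
  induction n with
  | zero =>
    intro f hle hinj hiso
    have hdim : finrank k f.domain = finrank k W :=
      le_antisymm (Submodule.finrank_le _) (by omega)
    exact witt_top ω f.domain (Submodule.eq_top_of_finrank_eq hdim) f.toFun hinj hiso
  | succ n ih =>
    intro f hle hinj hiso
    by_cases hT : f.domain = ⊤
    · exact witt_top ω f.domain hT f.toFun hinj hiso
    · obtain ⟨v, hv⟩ : ∃ v, v ∉ f.domain := by
        by_contra h
        push_neg at h
        exact hT (Submodule.eq_top_iff'.mpr h)
      obtain ⟨w, hwR, hw⟩ := witt_step ω halt hnd f.domain f.toFun hinj hiso v hv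
      set f' := f.supSpanSingleton v w hv with hf'
      have hdom : f'.domain = f.domain ⊔ k ∙ v := rfl
      have hmem : ∀ z : f'.domain, ∃ (x : f.domain) (c : k), (z : W) = (x : W) + c • v := by
        rintro ⟨z, hz⟩
        rw [hdom, Submodule.mem_sup] at hz
        obtain ⟨x, hx, s, hs, rfl⟩ := hz
        obtain ⟨c, rfl⟩ := Submodule.mem_span_singleton.mp hs
        exact ⟨⟨x, hx⟩, c, rfl⟩
      have happ : ∀ (x : f.domain) (c : k) (h : (x : W) + c • v ∈ f'.domain),
          f' ⟨(x : W) + c • v, h⟩ = f x + c • w := by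
        intro x c h
        have := f.supSpanSingleton_apply_mk v w hv (x : W) x.2 c
        convert this using 2
        rfl
      have hiso' : ∀ z z' : f'.domain, ω (f' z) (f' z') = ω (z : W) (z' : W) := by
        intro z z'
        obtain ⟨x, c, hx⟩ := hmem z
        obtain ⟨y, d, hy⟩ := hmem z'
        have hz1 : f' z = f x + c • w := by
          have hz : z = ⟨(x : W) + c • v, hx ▸ z.2⟩ := Subtype.ext hx
          rw [hz, happ]
        have hz2 : f' z' = f y + d • w := by
          have hz : z' = ⟨(y : W) + d • v, hy ▸ z'.2⟩ := Subtype.ext hy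
          rw [hz, happ]
        rw [hz1, hz2, hx, hy]
        have h1 : ω (f x) (f y) = ω (x : W) (y : W) := hiso x y
        have h2 : ω (f x) w = ω (x : W) v := hw x
        have h3 : ω (f y) w = ω (y : W) v := hw y
        have h4 : ω w (f y) = - ω (y : W) v := by rw [witt_skew ω halt, h3]
        have h5 : ω v (y : W) = - ω (y : W) v := witt_skew ω halt v (y : W)
        simp only [map_add, map_smul, LinearMap.add_apply, LinearMap.smul_apply,
          smul_eq_mul]
        rw [h1, h2, h4, h5, halt w, halt v]
        all_goals ring
      have hinj' : Function.Injective f'.toFun := by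
        rw [injective_iff_map_eq_zero]
        intro z hz
        obtain ⟨x, c, hx⟩ := hmem z
        have hzz : z = ⟨(x : W) + c • v, hx ▸ z.2⟩ := Subtype.ext hx
        replace hz : f' z = 0 := hz
        rw [hzz, happ] at hz
        by_cases hc : c = 0
        · subst hc
          simp only [zero_smul, add_zero] at hz
          have : x = 0 := by
            apply hinj
            simpa using hz
          apply Subtype.ext
          simp [hx, this]
        · exfalso
          apply hwR
          refine ⟨(-c⁻¹) • x, ?_⟩
          rw [map_smul]
          have : f.toFun x = -(c • w) := by
            have := hz
            rw [add_eq_zero_iff_eq_neg] at this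
            exact this
          rw [this]
          rw [smul_neg, smul_smul]
          field_simp
          simp
      have hlt : f.domain < f'.domain := by
        rw [hdom]
        refine lt_of_le_of_ne le_sup_left ?_
        intro h
        apply hv
        rw [h]
        exact Submodule.mem_sup_right (Submodule.mem_span_singleton_self v)
      have hle' : finrank k W ≤ finrank k f'.domain + n := by
        have := Submodule.finrank_lt_finrank_of_lt hlt
        omega
      obtain ⟨φ, hφ1, hφ2⟩ := ih f' hle' hinj' hiso'
      refine ⟨φ, hφ1, ?_⟩
      intro x
      have hx' : (x : W) ∈ f'.domain := by
        rw [hdom]; exact Submodule.mem_sup_left x.2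
      have := hφ2 ⟨(x : W), hx'⟩
      rw [this]
      have hxx : (⟨(x : W), hx'⟩ : f'.domain) = ⟨(x : W) + (0 : k) • v, by simpa using hx'⟩ := by
        apply Subtype.ext; simp
      rw [hxx, happ]
      simp

end Witt

/-- Witt's extension theorem for symplectic spaces: if `W` is a finite-dimensional
symplectic vector space over a finite field, `X ⊆ W` a subspace and `α : X → W` an injective
isometric linear map, then `α` extends to a symplectic automorphism of `W`. -/
theorem stmt5 {k W : Type*} [Field k] [Fintype k] [AddCommGroup W] [Module k W]
    [FiniteDimensional k W]
    (ω : W →ₗ[k] W →ₗ[k] k)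
    (halt : ∀ v, ω v v = 0)
    (hnd : ∀ v, (∀ u, ω v u = 0) → v = 0)
    (X : Submodule k W) (α : X →ₗ[k] W) (hinj : Function.Injective α)
    (hiso : ∀ x y : X, ω (α x) (α y) = ω (x : W) (y : W)) :
    ∃ φ : W ≃ₗ[k] W, (∀ v w, ω (φ v) (φ w) = ω v w) ∧ ∀ x : X, φ (x : W) = α x := by
  exact witt_aux ω halt hnd (finrank k W) ⟨X, α⟩ (by omega) hinj hiso
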